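/- arXiv:2103.11722 — 4 statements merged into one kernel-verified Lean document; each statement's English description precedes it below -/
import Mathlib

section
/- Let X be a totally disconnected compact Hausdorff space, R a Banach ring, K ⊆ X a closed subset, f : K → R continuous, and ε > 0. Then there exists a continuous function f̃ : X → R such that ‖f̃|_K − f‖_∞ < ε and ‖f̃‖_∞ ≤ ‖f‖_∞ + ε, where ‖·‖_∞ denotes the supremum norm. -/
/-- Approximate extension of continuous functions from a closed subset of a totally
disconnected compact Hausdorff space, with norm control. -/
theorem stmt3 {X : Type*} [TopologicalSpace X] [CompactSpace X] [T2Space X]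
    [TotallyDisconnectedSpace X] {R : Type*} [NormedRing R] [CompleteSpace R]
    (K : Set X) (hK : IsClosed K) [CompactSpace K]
    (f : C(K, R)) (ε : ℝ) (hε : 0 < ε) :
    ∃ g : C(X, R), ‖g.restrict K - f‖ < ε ∧ ‖g‖ ≤ ‖f‖ + ε := by
  -- For each point of K, choose a clopen neighborhood in X on which f varies by < ε.
  have hV : ∀ z : K, ∃ V : Set X, IsClopen V ∧ (z : X) ∈ V ∧
      ∀ w : K, (w : X) ∈ V → ‖f w - f z‖ < ε := by
    intro z
    have hopen : IsOpen {w : K | ‖f w - f z‖ < ε} := by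
      have : Continuous fun w : K => ‖f w - f z‖ :=
        (f.continuous.sub continuous_const).norm
      exact isOpen_lt this continuous_const
    obtain ⟨U, hU, hUeq⟩ := isOpen_induced_iff.mp hopen
    have hzU : (z : X) ∈ U := by
      have : z ∈ {w : K | ‖f w - f z‖ < ε} := by simp [hε]
      rw [← hUeq] at this; exact this
    obtain ⟨V, hVmem, hzV, hVU⟩ :=
      isTopologicalBasis_isClopen.exists_subset_of_mem_open hzU hU
    refine ⟨V, hVmem, hzV, fun w hw => ?_⟩
    have : w ∈ Subtype.val ⁻¹' U := hVU hw
    rw [hUeq] at this; exact this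
  choose V hVc hVz hVd using hV
  -- Finite subcover of K.
  have hcov : K ⊆ ⋃ z : K, V z := fun x hx => Set.mem_iUnion.2 ⟨⟨x, hx⟩, hVz _⟩
  obtain ⟨t, ht⟩ := hK.isCompact.elim_finite_subcover V (fun z => (hVc z).2) hcov
  -- Encode membership in the clopen sets as a locally constant map to a finite discrete space.
  let φ : X → ({z // z ∈ t} → Bool) := fun x z => (V z.1).boolIndicator x
  have hφ : Continuous φ :=
    continuous_pi fun z => (continuous_boolIndicator_iff_isClopen _).mpr (hVc z.1)
  have hlcφ : IsLocallyConstant φ := (IsLocallyConstant.iff_continuous φ).mpr hφ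
  -- The value function on the finite discrete space.
  let h : ({z // z ∈ t} → Bool) → R := fun b =>
    if hb : ∃ z, b z = true then f (hb.choose).1 else 0
  have hg : Continuous (h ∘ φ) := (hlcφ.comp h).continuous
  refine ⟨⟨h ∘ φ, hg⟩, ?_, ?_⟩
  · rw [ContinuousMap.norm_lt_iff _ hε]
    intro w
    have hw : (w : X) ∈ ⋃ z ∈ t, V z := ht w.2
    obtain ⟨z, hzt, hwz⟩ := Set.mem_iUnion₂.mp hw
    have hb : ∃ zz : {z // z ∈ t}, φ (w : X) zz = true :=
      ⟨⟨z, hzt⟩, (Set.mem_iff_boolIndicator _ _).mp hwz⟩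
    have hval : (h ∘ φ) (w : X) = f (hb.choose).1 := by
      simp only [Function.comp, h]
      rw [dif_pos hb]
    have hmem : (w : X) ∈ V (hb.choose).1 :=
      (Set.mem_iff_boolIndicator _ _).mpr hb.choose_spec
    simp only [ContinuousMap.sub_apply, ContinuousMap.restrict_apply]
    show ‖(h ∘ φ) (w : X) - f w‖ < ε
    rw [hval]
    have := hVd (hb.choose).1 w hmem
    calc ‖f (hb.choose).1 - f w‖ = ‖f w - f (hb.choose).1‖ := (norm_sub_rev _ _)
      _ < ε := this
  · have : ‖(⟨h ∘ φ, hg⟩ : C(X, R))‖ ≤ ‖f‖ := by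
      rw [ContinuousMap.norm_le _ (norm_nonneg f)]
      intro x
      show ‖h (φ x)‖ ≤ ‖f‖
      by_cases hb : ∃ z, φ x z = true
      · simp only [h, dif_pos hb]
        exact f.norm_coe_le_norm _
      · simp only [h, dif_neg hb, norm_zero]
        exact norm_nonneg f
    linarith
end

section
/- Let X be a totally disconnected compact Hausdorff space, R a Banach ring, and K ⊆ X a closed subset. Then the restriction map π : C(X,R) → C(K,R) is surjective; more precisely, for every f ∈ C(K,R) and every ε > 0 there exists f̃ ∈ C(X,R) with f̃|_K = f and ‖f̃‖_∞ ≤ ‖f‖_∞ + ε. -/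
open Set

theorem key_approx {X : Type*} [TopologicalSpace X] [CompactSpace X] [T2Space X]
    [TotallyDisconnectedSpace X] {R : Type*} [NormedRing R]
    (K : Set X) (hK : IsClosed K) [CompactSpace K]
    (φ : C(K, R)) (δ : ℝ) (hδ : 0 < δ) :
    ∃ H : C(X, R), ‖H‖ ≤ ‖φ‖ ∧ ‖φ - H.restrict K‖ ≤ δ := by
  classical
  -- for each x : K choose an open U x ⊆ X pulling back to the δ-ball preimage
  have hA : ∀ x : K, ∃ U : Set X, IsOpen U ∧ (Subtype.val ⁻¹' U : Set K) =
      φ ⁻¹' Metric.ball (φ x) δ := by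
    intro x
    have : IsOpen (φ ⁻¹' Metric.ball (φ x) δ) := φ.continuous.isOpen_preimage _ Metric.isOpen_ball
    rwa [isOpen_induced_iff] at this
  choose U hUopen hUpre using hA
  have hxU : ∀ x : K, (x : X) ∈ U x := by
    intro x
    have : x ∈ (Subtype.val ⁻¹' U x : Set K) := by
      rw [hUpre]; exact Metric.mem_ball_self hδ
    exact this
  -- choose clopen V x with x ∈ V x ⊆ U x
  have hV : ∀ x : K, ∃ V : Set X, IsClopen V ∧ (x : X) ∈ V ∧ V ⊆ U x := fun x =>
    compact_exists_isClopen_in_isOpen (hUopen x) (hxU x)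
  choose V hVclopen hxV hVU using hV
  -- finite subcover
  have hKc : IsCompact K := isCompact_iff_compactSpace.mpr ‹_›
  obtain ⟨t, ht⟩ := hKc.elim_finite_subcover V (fun x => (hVclopen x).2)
    (fun y hy => mem_iUnion.mpr ⟨⟨y, hy⟩, hxV _⟩)
  -- build H by induction on the finset
  have main : ∀ s : Finset K, ∃ H : C(X, R), ∀ y : X,
      (H y = 0 ∧ ∀ x ∈ s, y ∉ V x) ∨ (∃ x ∈ s, y ∈ V x ∧ H y = φ x) := by
    intro s
    induction s using Finset.induction with
    | empty => exact ⟨0, fun y => Or.inl ⟨rfl, by simp⟩⟩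
    | @insert a s ha ih =>
      obtain ⟨H, hH⟩ := ih
      set C : Set X := V a \ ⋃ x ∈ s, V x with hC
      have hCclopen : IsClopen C :=
        (hVclopen a).diff (isClopen_biUnion_finset fun x _ => hVclopen x)
      refine ⟨⟨C.piecewise (fun _ => φ a) H, ?_⟩, ?_⟩
      · exact (continuous_const (y := φ a)).piecewise
          (by rw [hCclopen.frontier_eq]; simp) H.continuous
      · intro y
        by_cases hy : y ∈ C
        · exact Or.inr ⟨a, Finset.mem_insert_self a s, hy.1, by
            simp [Set.piecewise_eq_of_mem _ _ _ hy]⟩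
        · have hcoe : C.piecewise (fun _ => φ a) H y = H y := Set.piecewise_eq_of_notMem _ _ _ hy
          rcases hH y with ⟨h0, hnot⟩ | ⟨x, hx, hyx, hval⟩
          · refine Or.inl ⟨by simpa [hcoe] using h0, ?_⟩
            intro x hx
            rcases Finset.mem_insert.mp hx with rfl | hx
            · intro hyV
              exact hy ⟨hyV, by simpa using hnot⟩
            · exact hnot x hx
          · exact Or.inr ⟨x, Finset.mem_insert_of_mem hx, hyx, by simpa [hcoe] using hval⟩
  obtain ⟨H, hH⟩ := main t
  refine ⟨H, ?_, ?_⟩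
  · rw [ContinuousMap.norm_le _ (norm_nonneg φ)]
    intro y
    rcases hH y with ⟨h0, _⟩ | ⟨x, _, _, hval⟩
    · simp [h0, norm_nonneg]
    · rw [hval]; exact φ.norm_coe_le_norm x
  · rw [ContinuousMap.norm_le _ hδ.le]
    intro z
    rcases hH z with ⟨_, hnot⟩ | ⟨x, hx, hzx, hval⟩
    · exfalso
      obtain ⟨x, hx, hzx⟩ := mem_iUnion₂.mp (ht z.2)
      exact hnot x hx hzx
    · have : z ∈ (Subtype.val ⁻¹' U x : Set K) := hVU x hzx
      rw [hUpre] at this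
      have : ‖φ z - φ x‖ < δ := by
        simpa [dist_eq_norm] using this
      calc ‖(φ - H.restrict K) z‖ = ‖φ z - φ x‖ := by
            simp [ContinuousMap.restrict, hval]
          _ ≤ δ := this.le

/-- Tietze-type extension: the restriction map `C(X,R) → C(K,R)` is surjective with norm
control, for `X` totally disconnected compact Hausdorff and `K ⊆ X` closed. -/
theorem stmt4 {X : Type*} [TopologicalSpace X] [CompactSpace X] [T2Space X]
    [TotallyDisconnectedSpace X] {R : Type*} [NormedRing R] [CompleteSpace R]
    (K : Set X) (hK : IsClosed K) [CompactSpace K]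
    (f : C(K, R)) (ε : ℝ) (hε : 0 < ε) :
    ∃ g : C(X, R), g.restrict K = f ∧ ‖g‖ ≤ ‖f‖ + ε := by
  classical
  choose E hE1 hE2 using fun (φ : C(K, R)) (δ : ℝ) (hδ : 0 < δ) => key_approx K hK φ δ hδ
  have hδpos : ∀ n : ℕ, 0 < ε / 2 / 2 ^ n := fun n => by positivity
  let r : ℕ → C(K, R) := fun n =>
    Nat.rec f (fun n rn => rn - (E rn (ε / 2 / 2 ^ n) (hδpos n)).restrict K) n
  let H : ℕ → C(X, R) := fun n => E (r n) (ε / 2 / 2 ^ n) (hδpos n)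
  have hrs : ∀ n, r (n + 1) = r n - (H n).restrict K := fun n => rfl
  have hrb : ∀ n, ‖r (n + 1)‖ ≤ ε / 2 / 2 ^ n := fun n => by
    rw [hrs]; exact hE2 (r n) _ (hδpos n)
  have hHb : ∀ n, ‖H n‖ ≤ ‖r n‖ := fun n => hE1 (r n) _ (hδpos n)
  have hHb' : ∀ n, ‖H (n + 1)‖ ≤ ε / 2 / 2 ^ n := fun n => (hHb (n + 1)).trans (hrb n)
  have hr0 : r 0 = f := rfl
  clear_value r H
  have hsumnorm : Summable fun n => ‖H n‖ := by
    rw [← summable_nat_add_iff 1]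
    exact Summable.of_nonneg_of_le (fun n => norm_nonneg _) hHb' (summable_geometric_two' ε)
  have hsum : Summable H := hsumnorm.of_norm
  set g : C(X, R) := ∑' n, H n with hg
  have hgsum : HasSum H g := hsum.hasSum
  -- remainders tend to 0
  have hrtend : Filter.Tendsto (fun n => ‖r n‖) Filter.atTop (nhds 0) := by
    rw [← Filter.tendsto_add_atTop_iff_nat 1]
    exact squeeze_zero (fun n => norm_nonneg _) hrb
      (by simpa using (summable_geometric_two' ε).tendsto_atTop_zero)
  refine ⟨g, ?_, ?_⟩
  · ext z
    -- partial sums at z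
    have hpart : ∀ N, ∑ n ∈ Finset.range N, H n (z : X) = f z - r N z := by
      intro N
      induction N with
      | zero => rw [hr0]; simp
      | succ N ih =>
        rw [Finset.sum_range_succ, ih, hrs N]
        simp [ContinuousMap.restrict]
        abel
    have h1 : HasSum (fun n => H n (z : X)) (g (z : X)) := ContinuousMap.hasSum_apply hgsum (z : X)
    have h2 : Filter.Tendsto (fun N => ∑ n ∈ Finset.range N, H n (z : X))
        Filter.atTop (nhds (f z)) := by
      have hz : Filter.Tendsto (fun N => r N z) Filter.atTop (nhds 0) :=
        squeeze_zero_norm (fun N => (r N).norm_coe_le_norm z) hrtend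
      have := Filter.Tendsto.const_sub (f z) hz
      rw [sub_zero] at this
      exact this.congr fun N => (hpart N).symm
    rw [ContinuousMap.restrict_apply]
    exact tendsto_nhds_unique h1.tendsto_sum_nat h2
  · have ha : Summable fun n => ‖H (n + 1)‖ := Summable.of_nonneg_of_le (fun n => norm_nonneg _) hHb' (summable_geometric_two' ε)
    have h3 : ∑' n, ‖H (n + 1)‖ ≤ ε := by
      rw [← tsum_geometric_two' ε]
      exact Summable.tsum_le_tsum hHb' ha (summable_geometric_two' ε)
    calc ‖g‖ ≤ ∑' n, ‖H n‖ := norm_tsum_le_tsum_norm hsumnorm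
      _ = ‖H 0‖ + ∑' n, ‖H (n + 1)‖ := Summable.tsum_eq_zero_add hsumnorm
      _ ≤ ‖f‖ + ε := add_le_add (hr0 ▸ hHb 0) h3
end

section
/- Let C*(X) and C*(Y) be the algebras C(X,ℂ), C(Y,ℂ) of continuous complex-valued functions on compact Hausdorff spaces X, Y, and let π : C(X,ℂ) → C(Y,ℂ) be the precomposition map f ↦ f ∘ Φ for a continuous map Φ : Y → X. If π is an epimorphism in the category of commutative C*-algebras (equivalently, Φ is a monomorphism of compact Hausdorff spaces), then Φ is injective and π is surjective. -/
universe u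

/-- If `Φ : Y → X` is a monomorphism of compact Hausdorff spaces (equivalently, the
precomposition `π : C(X,ℂ) → C(Y,ℂ)` is an epimorphism of commutative C*-algebras),
then `Φ` is injective and `π` is surjective. -/
theorem stmt15 {X Y : Type u} [TopologicalSpace X] [CompactSpace X] [T2Space X]
    [TopologicalSpace Y] [CompactSpace Y] [T2Space Y] (Φ : C(Y, X))
    (hmono : ∀ (Z : Type u) [TopologicalSpace Z] [CompactSpace Z] [T2Space Z]
      (g h : C(Z, Y)), Φ.comp g = Φ.comp h → g = h) :
    Function.Injective Φ ∧ Function.Surjective fun f : C(X, ℂ) => f.comp Φ := by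
  have hinj : Function.Injective Φ := by
    intro y₁ y₂ hy
    have := hmono PUnit.{u+1} (ContinuousMap.const _ y₁) (ContinuousMap.const _ y₂)
      (by ext z; simpa using hy)
    simpa using congrFun (congrArg DFunLike.coe this) PUnit.unit
  refine ⟨hinj, fun f => ?_⟩
  have hce := Φ.continuous.isClosedEmbedding hinj
  obtain ⟨g, hg⟩ := f.exists_extension (e := (Φ : Y → X)) hce
  exact ⟨g, hg⟩
end

section
/- Let X be a compact Hausdorff space, R = ℝ or ℂ, and K ⊆ X closed. Then every f ∈ C(X,R) vanishing on K factors as f = f₀·f₁ with f₀, f₁ ∈ C(X,R) both vanishing on K; that is, the ideal I_K = {f : f|_K = 0} satisfies I_K = I_K². -/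
/-- Every continuous function vanishing on a closed set `K` factors as a product of two
continuous functions vanishing on `K`: the ideal `I_K` satisfies `I_K = I_K²`. -/
theorem stmt16 {X : Type*} [TopologicalSpace X] [CompactSpace X] [T2Space X]
    {𝕜 : Type*} [RCLike 𝕜] (K : Set X) (hK : IsClosed K)
    (f : C(X, 𝕜)) (hf : ∀ x ∈ K, f x = 0) :
    ∃ f₀ f₁ : C(X, 𝕜), (∀ x ∈ K, f₀ x = 0) ∧ (∀ x ∈ K, f₁ x = 0) ∧ f = f₀ * f₁ := by
  set g : X → ℝ := fun x => Real.sqrt ‖f x‖ with hg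
  have hgc : Continuous g := (Real.continuous_sqrt.comp f.continuous.norm)
  have hbound : ∀ y, ‖f y / (g y : 𝕜)‖ ≤ g y := by
    intro y
    rcases eq_or_ne (f y) 0 with h | h
    · simp [h, hg, Real.sqrt_nonneg]
    · have hgy : g y ≠ 0 := by
        simp [hg, Real.sqrt_eq_zero', norm_eq_zero, h, not_lt.mpr (norm_nonneg _)]
      rw [norm_div, RCLike.norm_ofReal, abs_of_nonneg (Real.sqrt_nonneg _),
        div_le_iff₀ (lt_of_le_of_ne (Real.sqrt_nonneg _) (Ne.symm hgy))]
      rw [hg, Real.mul_self_sqrt (norm_nonneg _)]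
  have hc1 : Continuous fun x => f x / (g x : 𝕜) := by
    rw [continuous_iff_continuousAt]
    intro x
    rcases eq_or_ne (f x) 0 with h | h
    · have hx0 : f x / (g x : 𝕜) = 0 := by simp [h]
      rw [ContinuousAt, hx0]
      apply squeeze_zero_norm hbound
      have : Filter.Tendsto g (nhds x) (nhds (g x)) := hgc.continuousAt
      rwa [show g x = 0 by simp [hg, h]] at this
    · have hgx : (g x : 𝕜) ≠ 0 := by
        simp [hg, Real.sqrt_eq_zero', norm_eq_zero, h, not_lt.mpr (norm_nonneg _)]
      exact (f.continuous.continuousAt).div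
        ((RCLike.continuous_ofReal.comp hgc).continuousAt) hgx
  refine ⟨⟨fun x => (g x : 𝕜), RCLike.continuous_ofReal.comp hgc⟩,
    ⟨fun x => f x / (g x : 𝕜), hc1⟩, ?_, ?_, ?_⟩
  · intro x hx; simp [hg, hf x hx]
  · intro x hx; simp [hf x hx]
  · ext x
    rcases eq_or_ne (f x) 0 with h | h
    · simp [h]
    · have hgx : (g x : 𝕜) ≠ 0 := by
        simp [hg, Real.sqrt_eq_zero', norm_eq_zero, h, not_lt.mpr (norm_nonneg _)]
      simp only [ContinuousMap.mul_apply, ContinuousMap.coe_mk]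
      rw [mul_div_cancel₀ _ hgx]
end
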